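/- For k, m, j ∈ ℕ, the set C_{k,m,j} of pairs (K,L) of strictly convex bodies such that there exists u ∈ S^{n−1} with N(u,1/j) ⊆ B_{k,m}(K,L) is closed in the product space of pairs of strictly convex bodies with the Hausdorff metric. -/

import Mathlib

open scoped RealInnerProductSpace
open Metric Filter Topology

variable {n : ℕ}

/-- `u ⊞ λt = (u + λt)/‖u + λt‖`. -/
noncomputable def boxplus (u t : EuclideanSpace ℝ (Fin n)) (l : ℝ) : EuclideanSpace ℝ (Fin n) :=
  ‖u + l • t‖⁻¹ • (u + l • t)

/-- `ε`-tameness of `x` at `u` in direction `t`. -/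
def IsTame (x : EuclideanSpace ℝ (Fin n) → EuclideanSpace ℝ (Fin n))
    (u t : EuclideanSpace ℝ (Fin n)) (ε : ℝ) : Prop :=
  ∀ lam mu : ℝ, 0 < lam → lam < ε → 0 < mu → mu < ε →
    ⟪x (boxplus u t lam) - x u, t⟫ * ⟪x (boxplus u t (-mu)) - x u, t⟫ ≤ 0

/-- The angular metric `Δ(u,v) = arccos ⟪u,v⟫` on the unit sphere. -/
noncomputable def angDist (u v : EuclideanSpace ℝ (Fin n)) : ℝ := Real.arccos ⟪u, v⟫

/-- `B_{k,m}(K,L)`: the set of `u ∈ S^{n-1}` such that some `t ∈ T_u` has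
`N(t,1/m) ∩ T_u` contained in the set of directions in which `x_K − x_L` is `(1/k)`-tame
at `u`, where `x` is a choice of reverse Gauss map. -/
def Bkm (x : ConvexBody (EuclideanSpace ℝ (Fin n)) →
      EuclideanSpace ℝ (Fin n) → EuclideanSpace ℝ (Fin n))
    (K L : ConvexBody (EuclideanSpace ℝ (Fin n))) (k m : ℕ) :
    Set (EuclideanSpace ℝ (Fin n)) :=
  {u | u ∈ Metric.sphere (0 : EuclideanSpace ℝ (Fin n)) 1 ∧
    ∃ t, t ∈ Metric.sphere (0 : EuclideanSpace ℝ (Fin n)) 1 ∧ ⟪t, u⟫ = 0 ∧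
      ∀ s, s ∈ Metric.sphere (0 : EuclideanSpace ℝ (Fin n)) 1 → ⟪s, u⟫ = 0 →
        angDist t s < 1 / m → IsTame (fun v => x K v - x L v) u s (1 / k)}

lemma max_unique {E : Type*} [NormedAddCommGroup E] [InnerProductSpace ℝ E]
    {K : Set E} (hK : StrictConvex ℝ K) {v : E} (hv : v ≠ 0) {p q : E}
    (hp : p ∈ K) (hq : q ∈ K) (hpm : IsMaxOn (fun y => ⟪y, v⟫) K p)
    (hqm : IsMaxOn (fun y => ⟪y, v⟫) K q) : p = q := by
  by_contra hne
  have hmid : (1/2 : ℝ) • p + (1/2 : ℝ) • q ∈ interior K :=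
    hK hp hq hne (by norm_num) (by norm_num) (by norm_num)
  set z := (1/2 : ℝ) • p + (1/2 : ℝ) • q with hz
  obtain ⟨ε, hε, hball⟩ := Metric.isOpen_iff.mp isOpen_interior z hmid
  have hpq : ⟪q, v⟫ = ⟪p, v⟫ := le_antisymm (hpm hq) (hqm hp)
  have hzv : ⟪z, v⟫ = ⟪p, v⟫ := by
    rw [hz, inner_add_left, real_inner_smul_left, real_inner_smul_left, hpq]; ring
  set c := ε / (2 * ‖v‖) with hc
  have hvn : (0:ℝ) < ‖v‖ := norm_pos_iff.mpr hv
  have hcpos : 0 < c := by positivity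
  have hcv : ‖v‖ * c = ε / 2 := by rw [hc]; field_simp
  have hmem : z + c • v ∈ K := by
    refine interior_subset (hball ?_)
    rw [mem_ball, dist_eq_norm]
    simp only [add_sub_cancel_left, norm_smul, Real.norm_eq_abs, abs_of_pos hcpos]
    linarith [hcv]
  have h2 : ⟪z + c • v, v⟫ ≤ ⟪p, v⟫ := hpm hmem
  rw [inner_add_left, real_inner_smul_left, hzv] at h2
  nlinarith [real_inner_self_eq_norm_sq v]

lemma argmax_tendsto {E : Type*} [NormedAddCommGroup E] [InnerProductSpace ℝ E] [ProperSpace E]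
    {K : ℕ → ConvexBody E} {K0 : ConvexBody E}
    (hconv : Tendsto K atTop (𝓝 K0)) (hK0 : StrictConvex ℝ (K0 : Set E))
    {v : E} (hv : v ≠ 0) {y : ℕ → E}
    (hy : ∀ i, y i ∈ K i ∧ IsMaxOn (fun w => ⟪w, v⟫) (K i : Set E) (y i))
    {y0 : E} (hy0 : y0 ∈ K0 ∧ IsMaxOn (fun w => ⟪w, v⟫) (K0 : Set E) y0) :
    Tendsto y atTop (𝓝 y0) := by
  have hfin : ∀ i, EMetric.hausdorffEdist (K i : Set E) (K0 : Set E) ≠ ⊤ := fun i =>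
    Metric.hausdorffEdist_ne_top_of_nonempty_of_bounded (K i).nonempty K0.nonempty
      (K i).isCompact.isBounded K0.isCompact.isBounded
  have hdist : Tendsto (fun i => dist (K i) K0) atTop (𝓝 0) :=
    tendsto_iff_dist_tendsto_zero.mp hconv
  have hinf : Tendsto (fun i => infDist (y i) (K0 : Set E)) atTop (𝓝 0) := by
    refine squeeze_zero (fun i => infDist_nonneg) (fun i => ?_) hdist
    rw [← ConvexBody.hausdorffDist_coe]
    exact Metric.infDist_le_hausdorffDist_of_mem (hy i).1 (hfin i)
  have hinfq : ∀ q ∈ (K0 : Set E),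
      Tendsto (fun i => infDist q (K i : Set E)) atTop (𝓝 0) := by
    intro q hq
    refine squeeze_zero (fun i => infDist_nonneg) (fun i => ?_) hdist
    rw [← ConvexBody.hausdorffDist_coe, Metric.hausdorffDist_comm]
    exact Metric.infDist_le_hausdorffDist_of_mem hq
      (by rw [EMetric.hausdorffEdist_comm]; exact hfin i)
  refine tendsto_of_subseq_tendsto (fun ns hns => ?_)
  have hinf2 : Tendsto (fun i => infDist (y (ns i)) (K0 : Set E)) atTop (𝓝 0) :=
    hinf.comp hns
  obtain ⟨N, hN⟩ := eventually_atTop.mp (hinf2.eventually_lt_const (by norm_num : (0:ℝ) < 1))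
  set C := Metric.cthickening 1 (K0 : Set E) with hC
  have hCcomp : IsCompact C := K0.isCompact.cthickening
  have hmemC : ∀ i, y (ns (i + N)) ∈ C := by
    intro i
    obtain ⟨q, hq, hqd⟩ := K0.isCompact.exists_infDist_eq_dist K0.nonempty (y (ns (i + N)))
    exact Metric.mem_cthickening_of_dist_le _ q 1 _ hq
      (by rw [← hqd]; exact le_of_lt (hN _ (Nat.le_add_left N i)))
  obtain ⟨p, hpC, φ, hφ, hptend⟩ := hCcomp.tendsto_subseq hmemC
  set ms : ℕ → ℕ := fun i => φ i + N with hms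
  have hmstop : Tendsto (fun i => ns (ms i)) atTop atTop :=
    hns.comp ((tendsto_add_atTop_nat N).comp hφ.tendsto_atTop)
  have hyt : Tendsto (fun i => y (ns (ms i))) atTop (𝓝 p) := hptend
  have hpK0 : p ∈ (K0 : Set E) := by
    have h1 : Tendsto (fun i => infDist (y (ns (ms i))) (K0 : Set E)) atTop
        (𝓝 (infDist p (K0 : Set E))) :=
      ((continuous_infDist_pt (K0 : Set E)).tendsto p).comp hyt
    have h2 : Tendsto (fun i => infDist (y (ns (ms i))) (K0 : Set E)) atTop (𝓝 0) :=
      hinf.comp hmstop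
    exact (K0.isClosed.mem_iff_infDist_zero K0.nonempty).mpr (tendsto_nhds_unique h1 h2)
  have hpmax : IsMaxOn (fun w => ⟪w, v⟫) (K0 : Set E) p := by
    intro q hq
    have hex : ∀ i, ∃ z ∈ (K (ns (ms i)) : Set E),
        infDist q (K (ns (ms i)) : Set E) = dist q z :=
      fun i => (K (ns (ms i))).isCompact.exists_infDist_eq_dist (K (ns (ms i))).nonempty q
    choose qq hqq hqqd using hex
    have hqqt : Tendsto qq atTop (𝓝 q) := by
      rw [tendsto_iff_dist_tendsto_zero]
      have := (hinfq q hq).comp hmstop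
      simpa only [Function.comp_def, ← hqqd, dist_comm] using this
    have hle : ∀ i, ⟪qq i, v⟫ ≤ ⟪y (ns (ms i)), v⟫ := fun i => (hy (ns (ms i))).2 (hqq i)
    have h1 : Tendsto (fun i => ⟪qq i, v⟫) atTop (𝓝 ⟪q, v⟫) :=
      ((continuous_id.inner continuous_const).tendsto q).comp hqqt
    have h2 : Tendsto (fun i => ⟪y (ns (ms i)), v⟫) atTop (𝓝 ⟪p, v⟫) :=
      ((continuous_id.inner continuous_const).tendsto p).comp hyt
    exact le_of_tendsto_of_tendsto h1 h2 (Eventually.of_forall hle)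
  exact ⟨ms, (max_unique hK0 hv hpK0 hy0.1 hpmax hy0.2) ▸ hyt⟩

lemma boxplus_mem_sphere {z s : EuclideanSpace ℝ (Fin n)}
    (hz : z ∈ Metric.sphere (0 : EuclideanSpace ℝ (Fin n)) 1)
    (hs : s ∈ Metric.sphere (0 : EuclideanSpace ℝ (Fin n)) 1)
    (hsz : ⟪s, z⟫ = 0) (l : ℝ) :
    boxplus z s l ∈ Metric.sphere (0 : EuclideanSpace ℝ (Fin n)) 1 := by
  rw [mem_sphere_zero_iff_norm] at *
  have horth : ⟪z, l • s⟫ = 0 := by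
    rw [real_inner_smul_right, real_inner_comm, hsz, mul_zero]
  have hnorm : ‖z + l • s‖ ^ 2 = 1 + l ^ 2 := by
    rw [norm_add_sq_real, horth, hz, norm_smul, hs]
    simp [Real.norm_eq_abs, sq_abs]
  have hne : ‖z + l • s‖ ≠ 0 := by
    intro h
    rw [h] at hnorm
    nlinarith [sq_nonneg l]
  unfold boxplus
  rw [norm_smul, norm_inv, norm_norm, inv_mul_cancel₀ hne]

lemma ne_zero_of_mem_unitSphere {w : EuclideanSpace ℝ (Fin n)}
    (hw : w ∈ Metric.sphere (0 : EuclideanSpace ℝ (Fin n)) 1) : w ≠ 0 := by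
  rw [mem_sphere_zero_iff_norm] at hw
  intro h
  rw [h, norm_zero] at hw
  norm_num at hw

set_option synthInstance.maxHeartbeats 1000000 in
/-- For `k, m, j ∈ ℕ`, the set `C_{k,m,j}` of pairs `(K,L)` of strictly convex bodies such that
there exists `u ∈ S^{n-1}` with `N(u,1/j) ⊆ B_{k,m}(K,L)` is closed in the space of pairs of
strictly convex bodies with the (product) Hausdorff metric. Here `x` is any choice of reverse
Gauss map: `x K v` is the unique point of `K` maximizing `⟪·,v⟫` whenever `K` is strictly
convex and `v` is a unit vector. -/
theorem stmt11
    (x : ConvexBody (EuclideanSpace ℝ (Fin n)) →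
      EuclideanSpace ℝ (Fin n) → EuclideanSpace ℝ (Fin n))
    (hx : ∀ K : ConvexBody (EuclideanSpace ℝ (Fin n)),
      StrictConvex ℝ (K : Set (EuclideanSpace ℝ (Fin n))) →
      ∀ v ∈ Metric.sphere (0 : EuclideanSpace ℝ (Fin n)) 1,
        x K v ∈ K ∧ IsMaxOn (fun y => ⟪y, v⟫) (K : Set (EuclideanSpace ℝ (Fin n))) (x K v))
    (k m j : ℕ) :
    IsClosed {p : {K : ConvexBody (EuclideanSpace ℝ (Fin n)) //
          StrictConvex ℝ (K : Set (EuclideanSpace ℝ (Fin n)))} ×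
        {K : ConvexBody (EuclideanSpace ℝ (Fin n)) //
          StrictConvex ℝ (K : Set (EuclideanSpace ℝ (Fin n)))} |
      ∃ u ∈ Metric.sphere (0 : EuclideanSpace ℝ (Fin n)) 1,
        ∀ z ∈ Metric.sphere (0 : EuclideanSpace ℝ (Fin n)) 1,
          angDist u z < 1 / j → z ∈ Bkm x (p.1 : ConvexBody (EuclideanSpace ℝ (Fin n)))
            (p.2 : ConvexBody (EuclideanSpace ℝ (Fin n))) k m} := by
  rw [← isSeqClosed_iff_isClosed]
  intro P p hP htend
  simp only [Set.mem_setOf_eq] at hP ⊢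
  choose u hu hprop using hP
  have hKtend : Tendsto (fun i => ((P i).1 : ConvexBody (EuclideanSpace ℝ (Fin n)))) atTop
      (𝓝 (p.1 : ConvexBody (EuclideanSpace ℝ (Fin n)))) :=
    ((continuous_subtype_val.comp continuous_fst).tendsto p).comp htend
  have hLtend : Tendsto (fun i => ((P i).2 : ConvexBody (EuclideanSpace ℝ (Fin n)))) atTop
      (𝓝 (p.2 : ConvexBody (EuclideanSpace ℝ (Fin n)))) :=
    ((continuous_subtype_val.comp continuous_snd).tendsto p).comp htend
  obtain ⟨u0, hu0, φ, hφ, hutend⟩ :=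
    (isCompact_sphere (0 : EuclideanSpace ℝ (Fin n)) 1).tendsto_subseq hu
  refine ⟨u0, hu0, fun z hz hang => ?_⟩
  have hcont : ∀ w : EuclideanSpace ℝ (Fin n),
      Continuous fun v : EuclideanSpace ℝ (Fin n) => angDist v w :=
    fun w => Real.continuous_arccos.comp (continuous_id.inner continuous_const)
  have h1 : Tendsto (fun i => angDist (u (φ i)) z) atTop (𝓝 (angDist u0 z)) :=
    ((hcont z).tendsto u0).comp hutend
  obtain ⟨N, hN⟩ := eventually_atTop.mp (h1.eventually_lt_const hang)
  set g : ℕ → ℕ := fun i => φ (i + N) with hg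
  have hzB : ∀ i, z ∈ Bkm x ((P (g i)).1 : ConvexBody (EuclideanSpace ℝ (Fin n)))
      ((P (g i)).2 : ConvexBody (EuclideanSpace ℝ (Fin n))) k m :=
    fun i => hprop (g i) z hz (hN (i + N) (Nat.le_add_left N i))
  have hBt := fun i => (hzB i).2
  choose t ht1 ht2 ht3 using hBt
  obtain ⟨t0, ht0, ψ, hψ, httend⟩ :=
    (isCompact_sphere (0 : EuclideanSpace ℝ (Fin n)) 1).tendsto_subseq ht1
  have ht0z : ⟪t0, z⟫ = 0 := by
    have hT : Tendsto (fun i => ⟪t (ψ i), z⟫) atTop (𝓝 ⟪t0, z⟫) :=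
      ((continuous_id.inner continuous_const).tendsto t0).comp httend
    exact tendsto_nhds_unique (hT.congr fun i => ht2 (ψ i)) tendsto_const_nhds
  refine ⟨hz, t0, ht0, ht0z, fun s hs hsz hts => ?_⟩
  have h2 : Tendsto (fun i => angDist (t (ψ i)) s) atTop (𝓝 (angDist t0 s)) :=
    ((hcont s).tendsto t0).comp httend
  obtain ⟨M, hM⟩ := eventually_atTop.mp (h2.eventually_lt_const hts)
  set idx : ℕ → ℕ := fun i => g (ψ i) with hidx
  have htame : ∀ i ≥ M,
      IsTame (fun v => x ((P (idx i)).1 : ConvexBody (EuclideanSpace ℝ (Fin n))) v -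
        x ((P (idx i)).2 : ConvexBody (EuclideanSpace ℝ (Fin n))) v) z s (1 / k) :=
    fun i hi => ht3 (ψ i) s hs hsz (hM i hi)
  intro lam mu hl1 hl2 hm1 hm2
  have hidxtop : Tendsto idx atTop atTop :=
    hφ.tendsto_atTop.comp ((tendsto_add_atTop_nat N).comp hψ.tendsto_atTop)
  have hKK : Tendsto (fun i => ((P (idx i)).1 : ConvexBody (EuclideanSpace ℝ (Fin n)))) atTop
      (𝓝 (p.1 : ConvexBody (EuclideanSpace ℝ (Fin n)))) := hKtend.comp hidxtop
  have hLL : Tendsto (fun i => ((P (idx i)).2 : ConvexBody (EuclideanSpace ℝ (Fin n)))) atTop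
      (𝓝 (p.2 : ConvexBody (EuclideanSpace ℝ (Fin n)))) := hLtend.comp hidxtop
  have hv1 : boxplus z s lam ∈ Metric.sphere (0 : EuclideanSpace ℝ (Fin n)) 1 :=
    boxplus_mem_sphere hz hs hsz lam
  have hv2 : boxplus z s (-mu) ∈ Metric.sphere (0 : EuclideanSpace ℝ (Fin n)) 1 :=
    boxplus_mem_sphere hz hs hsz (-mu)
  have hxK : ∀ w ∈ Metric.sphere (0 : EuclideanSpace ℝ (Fin n)) 1,
      Tendsto (fun i => x ((P (idx i)).1 : ConvexBody (EuclideanSpace ℝ (Fin n))) w) atTop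
        (𝓝 (x (p.1 : ConvexBody (EuclideanSpace ℝ (Fin n))) w)) := fun w hw =>
    argmax_tendsto hKK p.1.2 (ne_zero_of_mem_unitSphere hw)
      (fun i => hx _ (P (idx i)).1.2 w hw) (hx _ p.1.2 w hw)
  have hxL : ∀ w ∈ Metric.sphere (0 : EuclideanSpace ℝ (Fin n)) 1,
      Tendsto (fun i => x ((P (idx i)).2 : ConvexBody (EuclideanSpace ℝ (Fin n))) w) atTop
        (𝓝 (x (p.2 : ConvexBody (EuclideanSpace ℝ (Fin n))) w)) := fun w hw =>
    argmax_tendsto hLL p.2.2 (ne_zero_of_mem_unitSphere hw)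
      (fun i => hx _ (P (idx i)).2.2 w hw) (hx _ p.2.2 w hw)
  have T : Tendsto (fun i =>
      ⟪(x ((P (idx i)).1 : ConvexBody (EuclideanSpace ℝ (Fin n))) (boxplus z s lam) -
          x ((P (idx i)).2 : ConvexBody (EuclideanSpace ℝ (Fin n))) (boxplus z s lam)) -
        (x ((P (idx i)).1 : ConvexBody (EuclideanSpace ℝ (Fin n))) z -
          x ((P (idx i)).2 : ConvexBody (EuclideanSpace ℝ (Fin n))) z), s⟫ *
      ⟪(x ((P (idx i)).1 : ConvexBody (EuclideanSpace ℝ (Fin n))) (boxplus z s (-mu)) -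
          x ((P (idx i)).2 : ConvexBody (EuclideanSpace ℝ (Fin n))) (boxplus z s (-mu))) -
        (x ((P (idx i)).1 : ConvexBody (EuclideanSpace ℝ (Fin n))) z -
          x ((P (idx i)).2 : ConvexBody (EuclideanSpace ℝ (Fin n))) z), s⟫) atTop
      (𝓝 (⟪(x (p.1 : ConvexBody (EuclideanSpace ℝ (Fin n))) (boxplus z s lam) -
          x (p.2 : ConvexBody (EuclideanSpace ℝ (Fin n))) (boxplus z s lam)) -
        (x (p.1 : ConvexBody (EuclideanSpace ℝ (Fin n))) z -
          x (p.2 : ConvexBody (EuclideanSpace ℝ (Fin n))) z), s⟫ *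
      ⟪(x (p.1 : ConvexBody (EuclideanSpace ℝ (Fin n))) (boxplus z s (-mu)) -
          x (p.2 : ConvexBody (EuclideanSpace ℝ (Fin n))) (boxplus z s (-mu))) -
        (x (p.1 : ConvexBody (EuclideanSpace ℝ (Fin n))) z -
          x (p.2 : ConvexBody (EuclideanSpace ℝ (Fin n))) z), s⟫)) :=
    ((((hxK _ hv1).sub (hxL _ hv1)).sub ((hxK _ hz).sub (hxL _ hz))).inner
        tendsto_const_nhds).mul
      ((((hxK _ hv2).sub (hxL _ hv2)).sub ((hxK _ hz).sub (hxL _ hz))).inner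
        tendsto_const_nhds)
  refine le_of_tendsto T (eventually_atTop.mpr ⟨M, fun i hi => ?_⟩)
  exact htame i hi lam mu hl1 hl2 hm1 hm2
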